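/- A group that is an extension of an lcH-slender group by an lcH-slender group is lcH-slender. -/

import Mathlib

universe u

/-- A group `G` is lcH-slender if every group homomorphism from a locally compact
Hausdorff topological group to `G` has open kernel. -/
def IsLCHSlender (G : Type*) [Group G] : Prop :=
  ∀ (H : Type u) [Group H] [TopologicalSpace H] [IsTopologicalGroup H]
    [LocallyCompactSpace H] [T2Space H],
    ∀ φ : H →* G, IsOpen ((φ : H → G) ⁻¹' {1})

/-- An extension of an lcH-slender group by an lcH-slender group is lcH-slender. -/
theorem isLCHSlender_of_extension
    {K G Q : Type*} [Group K] [Group G] [Group Q]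
    (ι : K →* G) (q : G →* Q)
    (hι : Function.Injective ι) (hq : Function.Surjective q)
    (hexact : ι.range = q.ker)
    (hK : IsLCHSlender.{u} K) (hQ : IsLCHSlender.{u} Q) :
    IsLCHSlender.{u} G := by
  intro H _ _ _ _ _ φ
  set N : Subgroup H := (q.comp φ).ker with hNdef
  have hNopen : IsOpen (N : Set H) := by
    have h1 := hQ H (q.comp φ)
    have : (N : Set H) = (q.comp φ : H → Q) ⁻¹' {1} := by
      ext x; simp [hNdef, MonoidHom.mem_ker]
    rw [this]; exact h1
  have hmem : ∀ x : N, φ (x : H) ∈ ι.range := by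
    intro x
    rw [hexact, MonoidHom.mem_ker]
    exact x.2
  haveI : LocallyCompactSpace N := hNopen.locallyCompactSpace
  let e : K ≃* ι.range := MonoidHom.ofInjective hι
  let ψ : N →* K :=
    e.symm.toMonoidHom.comp ((φ.comp N.subtype).codRestrict ι.range hmem)
  have hψ : ∀ x : N, ψ x = 1 ↔ φ (x : H) = 1 := by
    intro x
    constructor
    · intro h
      have : ((φ.comp N.subtype).codRestrict ι.range hmem) x = 1 := by
        have := congrArg e h
        simpa [ψ, MulEquiv.apply_symm_apply] using this
      have := congrArg (Subtype.val : ι.range → G) this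
      exact this
    · intro h
      apply e.injective
      simpa [ψ, MulEquiv.apply_symm_apply, e] using
        Subtype.ext (by exact h : (((φ.comp N.subtype).codRestrict ι.range hmem) x : G)
          = ((1 : ι.range) : G))
  have hopenψ : IsOpen ((ψ : N → K) ⁻¹' {1}) := hK N ψ
  have himg : (φ : H → G) ⁻¹' {1} = (Subtype.val : N → H) '' ((ψ : N → K) ⁻¹' {1}) := by
    ext x
    constructor
    · intro hx
      have hxN : x ∈ N := by
        simp only [hNdef, MonoidHom.mem_ker, MonoidHom.comp_apply]
        rw [Set.mem_preimage, Set.mem_singleton_iff] at hx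
        rw [hx, map_one]
      refine ⟨⟨x, hxN⟩, ?_, rfl⟩
      rw [Set.mem_preimage, Set.mem_singleton_iff, hψ]
      exact hx
    · rintro ⟨y, hy, rfl⟩
      rw [Set.mem_preimage, Set.mem_singleton_iff] at hy ⊢
      exact (hψ y).mp hy
  rw [himg]
  exact hNopen.isOpenMap_subtype_val _ hopenψ
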